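/- Let C_M be the cycle graph on M = 2mn vertices labeled by Z_M, and let P_M be the permutation sending even x to x−2 mod M and odd x to x+2 mod M. Then an edge (x,y) belongs to the union C_M ∪ P_M(C_M) ∪ ⋯ ∪ P_M^{M/2}(C_M) if and only if x − y ≡ 1 (mod 2). -/

import Mathlib

/-- The staggered-swap relabeling: even labels shift by `−2`, odd labels by `+2`
(mod `M`). -/
def cyclePerm (M : ℕ) (x : ZMod M) : ZMod M :=
  if x.val % 2 = 0 then x - 2 else x + 2

section Aux

variable {M : ℕ} [NeZero M]

lemma valAddParity (hM2 : 2 ∣ M) (x y : ZMod M) : (x + y).val % 2 = (x.val + y.val) % 2 := by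
  rw [ZMod.val_add, Nat.mod_mod_of_dvd _ hM2]

lemma val_two_parity (hM2 : 2 ∣ M) : (2 : ZMod M).val % 2 = 0 := by
  have : ((2 : ℕ) : ZMod M).val = 2 % M := ZMod.val_natCast M 2
  have h2 : ((2 : ℕ) : ZMod M) = (2 : ZMod M) := by norm_cast
  rw [← h2, this, Nat.mod_mod_of_dvd _ hM2]

lemma parity_cyclePerm (hM2 : 2 ∣ M) (x : ZMod M) : (cyclePerm M x).val % 2 = x.val % 2 := by
  have h2 := val_two_parity (M := M) hM2
  unfold cyclePerm
  split
  · have := valAddParity hM2 (x - 2) 2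
    rw [sub_add_cancel] at this
    omega
  · have := valAddParity hM2 x 2
    omega

lemma parity_iterate (hM2 : 2 ∣ M) (k : ℕ) (x : ZMod M) :
    ((cyclePerm M)^[k] x).val % 2 = x.val % 2 := by
  induction k with
  | zero => rfl
  | succ k ih => rw [Function.iterate_succ_apply', parity_cyclePerm hM2, ih]

lemma iter_even (hM2 : 2 ∣ M) (x : ZMod M) (hx : x.val % 2 = 0) (k : ℕ) :
    (cyclePerm M)^[k] x = x - 2 * (k : ZMod M) := by
  induction k with
  | zero => simp
  | succ k ih =>
    rw [Function.iterate_succ_apply', ih]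
    have hpar : (x - 2 * (k : ZMod M)).val % 2 = 0 := by
      rw [← ih, parity_iterate hM2]; exact hx
    rw [cyclePerm, if_pos hpar]
    push_cast
    ring

lemma iter_odd (hM2 : 2 ∣ M) (x : ZMod M) (hx : x.val % 2 = 1) (k : ℕ) :
    (cyclePerm M)^[k] x = x + 2 * (k : ZMod M) := by
  induction k with
  | zero => simp
  | succ k ih =>
    rw [Function.iterate_succ_apply', ih]
    have hpar : (x + 2 * (k : ZMod M)).val % 2 = 1 := by
      rw [← ih, parity_iterate hM2]; exact hx
    rw [cyclePerm, if_neg (by omega)]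
    push_cast
    ring

lemma val_one_parity (hM : 2 ≤ M) : (1 : ZMod M).val = 1 := by
  have : ((1 : ℕ) : ZMod M).val = 1 % M := ZMod.val_natCast M 1
  have h1 : ((1 : ℕ) : ZMod M) = (1 : ZMod M) := by norm_cast
  rw [← h1, this, Nat.mod_eq_of_lt (by omega)]

lemma exists_of_even (hM2 : 2 ∣ M) (hM : 2 ≤ M) (x y : ZMod M) (hx : x.val % 2 = 0)
    (hsum : (x.val + y.val) % 2 = 1) :
    ∃ k ≤ M / 2, ∃ a b : ZMod M, (b = a + 1 ∨ a = b + 1) ∧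
        x = (cyclePerm M)^[k] a ∧ y = (cyclePerm M)^[k] b := by
  set d : ℕ := (y - x).val with hd
  have hdlt : d < M := ZMod.val_lt _
  have hdodd : d % 2 = 1 := by
    have := valAddParity hM2 (y - x) x
    rw [sub_add_cancel] at this
    omega
  have hcast : ((d : ℕ) : ZMod M) = y - x := by
    rw [hd, ZMod.natCast_val, ZMod.cast_id]
  have hyx : y = x + (d : ZMod M) := by rw [hcast]; ring
  have h2k : ∀ k : ℕ, ((2 * k : ℕ) : ZMod M).val % 2 = 0 := by
    intro k
    rw [ZMod.val_natCast, Nat.mod_mod_of_dvd _ hM2, Nat.mul_mod_right]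
  rcases Nat.lt_or_ge (d % 4) 2 with hd4 | hd4
  · -- d % 4 = 1
    have hd4' : d % 4 = 1 := by omega
    refine ⟨d / 4, by omega, x + ((2 * (d / 4) : ℕ) : ZMod M), _, Or.inl rfl, ?_, ?_⟩
    · have ha : (x + ((2 * (d / 4) : ℕ) : ZMod M)).val % 2 = 0 := by
        have := valAddParity hM2 x ((2 * (d / 4) : ℕ) : ZMod M)
        have := h2k (d / 4)
        omega
      rw [iter_even hM2 _ ha]
      push_cast
      ring
    · have ha : (x + ((2 * (d / 4) : ℕ) : ZMod M)).val % 2 = 0 := by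
        have := valAddParity hM2 x ((2 * (d / 4) : ℕ) : ZMod M)
        have := h2k (d / 4)
        omega
      have hb : (x + ((2 * (d / 4) : ℕ) : ZMod M) + 1).val % 2 = 1 := by
        have := valAddParity hM2 (x + ((2 * (d / 4) : ℕ) : ZMod M)) 1
        rw [val_one_parity hM] at this
        omega
      rw [iter_odd hM2 _ hb, hyx]
      have : ((d : ℕ) : ZMod M) = ((4 * (d / 4) + 1 : ℕ) : ZMod M) := by
        rw [show 4 * (d / 4) + 1 = d by omega]
      rw [this]
      push_cast
      ring
  · -- d % 4 = 3
    have hd4' : d % 4 = 3 := by omega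
    set k : ℕ := (d + 1) / 4 with hk
    have hkM : k ≤ M / 2 := by omega
    refine ⟨k, hkM, x + ((2 * k : ℕ) : ZMod M),
      x + ((2 * k : ℕ) : ZMod M) - 1, Or.inr (by ring), ?_, ?_⟩
    · have ha : (x + ((2 * k : ℕ) : ZMod M)).val % 2 = 0 := by
        have := valAddParity hM2 x ((2 * k : ℕ) : ZMod M)
        have := h2k k
        omega
      rw [iter_even hM2 _ ha]
      push_cast
      ring
    · have ha : (x + ((2 * k : ℕ) : ZMod M)).val % 2 = 0 := by
        have := valAddParity hM2 x ((2 * k : ℕ) : ZMod M)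
        have := h2k k
        omega
      have hb : (x + ((2 * k : ℕ) : ZMod M) - 1).val % 2 = 1 := by
        have := valAddParity hM2 (x + ((2 * k : ℕ) : ZMod M) - 1) 1
        rw [sub_add_cancel, val_one_parity hM] at this
        omega
      rw [iter_odd hM2 _ hb, hyx]
      have : ((d : ℕ) : ZMod M) + 1 = ((4 * k : ℕ) : ZMod M) := by
        rw [show (4 * k : ℕ) = d + 1 by omega]
        push_cast
        ring
      have hdval : ((d : ℕ) : ZMod M) = ((4 * k : ℕ) : ZMod M) - 1 := by
        rw [← this]; ring
      rw [hdval]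
      push_cast
      ring

end Aux

/-- Let `C_M` be the cycle graph on `M = 2mn` vertices (edges between `x` and `x+1`
mod `M`) and `P_M` the permutation sending even `x` to `x−2` and odd `x` to `x+2`
mod `M`.  Then `(x,y)` is an edge of `C_M ∪ P_M(C_M) ∪ ⋯ ∪ P_M^{M/2}(C_M)` if and
only if `x − y ≡ 1 (mod 2)`. -/
theorem cycle_union_edges_iff_opposite_parity
    (M m n : ℕ) (hm : 1 ≤ m) (hn : 1 ≤ n) (hM : M = 2 * m * n)
    (x y : ZMod M) :
    (∃ k ≤ M / 2, ∃ a b : ZMod M, (b = a + 1 ∨ a = b + 1) ∧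
        x = (cyclePerm M)^[k] a ∧ y = (cyclePerm M)^[k] b)
      ↔ (x.val + y.val) % 2 = 1 := by
  have hM2' : 2 ≤ M := by subst hM; nlinarith
  haveI : NeZero M := ⟨by omega⟩
  have hM2 : 2 ∣ M := ⟨m * n, by rw [hM]; ring⟩
  constructor
  · rintro ⟨k, hk, a, b, hrel, hxa, hyb⟩
    have hxp : x.val % 2 = a.val % 2 := by rw [hxa, parity_iterate hM2]
    have hyp : y.val % 2 = b.val % 2 := by rw [hyb, parity_iterate hM2]
    have h1 := val_one_parity (M := M) hM2'
    rcases hrel with h | h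
    · have := valAddParity hM2 a 1
      rw [← h] at this
      omega
    · have := valAddParity hM2 b 1
      rw [← h] at this
      omega
  · intro hsum
    rcases Nat.lt_or_ge (x.val % 2) 1 with hx | hx
    · exact exists_of_even hM2 hM2' x y (by omega) hsum
    · have hy : y.val % 2 = 0 := by omega
      obtain ⟨k, hk, a, b, hrel, hya, hxb⟩ :=
        exists_of_even hM2 hM2' y x hy (by omega)
      exact ⟨k, hk, b, a, hrel.symm, hxb, hya⟩
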